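/- One has 𝒢(2,0) = (3√3)/π − 3. -/

import Mathlib

open intervalIntegral Real Complex

/-- `u(t) = (−1 + i√(4t−1))/(2t)`. -/
noncomputable def uu (t : ℝ) : ℂ :=
  (-1 + Complex.I * (Real.sqrt (4 * t - 1) : ℝ)) / (2 * t)

/-- The renormalized Green's function of the triangular-lattice walk:
`𝒢(x,y) = (3/π) ∫_{1/4}^{1} (4t−1)^{−1/2} ( t^y Σ_{j=1}^{x} C(x,j)(1−t)^{j−1} Re(u(t)^j)
  − Σ_{ℓ=0}^{y−1} t^ℓ ) dt`. -/
noncomputable def calG (x y : ℕ) : ℝ :=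
  (3 / Real.pi) * ∫ t in (1/4 : ℝ)..1,
    (1 / Real.sqrt (4 * t - 1)) *
      (t ^ y * ∑ j ∈ Finset.Icc 1 x, (x.choose j : ℝ) * (1 - t) ^ (j - 1) * ((uu t) ^ j).re
        - ∑ l ∈ Finset.range y, t ^ l)

/-- Antiderivative for the `x = 2, y = 0` integrand. -/
noncomputable def FF (t : ℝ) : ℝ :=
  Real.sqrt (4*t-1)/2 - 3 * Real.arctan (Real.sqrt (4*t-1)) + Real.sqrt (4*t-1)/(2*t)

lemma bracket_eq (t : ℝ) (ht : 0 < t) (h4 : 1/4 ≤ t) :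
    (t ^ 0 * ∑ j ∈ Finset.Icc 1 2, ((Nat.choose 2 j : ℝ)) * (1 - t) ^ (j - 1) * ((uu t) ^ j).re
        - ∑ l ∈ Finset.range 0, t ^ l) = (2*t^2 - 5*t + 1)/(2*t^2) := by
  have hs : Real.sqrt (4*t-1) ^ 2 = 4*t-1 := Real.sq_sqrt (by linarith)
  have ht' : t ≠ 0 := ne_of_gt ht
  have hre : (uu t).re = -1/(2*t) := by
    simp [uu, Complex.div_re, Complex.normSq_apply]; field_simp
  have him : (uu t).im = Real.sqrt (4*t-1)/(2*t) := by
    simp [uu, Complex.div_im, Complex.normSq_apply]; field_simp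
  have hre2 : ((uu t)^2).re = (1 - (4*t-1))/(4*t^2) := by
    rw [pow_two, Complex.mul_re, hre, him]
    field_simp
    have hs' : Real.sqrt (t*4-1) ^ 2 = t*4-1 := Real.sq_sqrt (by linarith)
    nlinarith [hs, hs']
  have hset : Finset.Icc 1 2 = ({1, 2} : Finset ℕ) := by decide
  rw [hset, Finset.sum_pair (by norm_num)]
  rw [pow_one, hre, hre2]
  norm_num
  field_simp
  ring

lemma FF_hasDerivAt (t : ℝ) (ht : t ∈ Set.Ioo (1/4 : ℝ) 1) :
    HasDerivAt FF ((1 / Real.sqrt (4*t-1)) * ((2*t^2 - 5*t + 1)/(2*t^2))) t := by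
  obtain ⟨h1, h2⟩ := ht
  have ht0 : (0:ℝ) < t := by linarith
  have hu : (0:ℝ) < 4*t-1 := by linarith
  set s := Real.sqrt (4*t-1) with hs_def
  have hs0 : 0 < s := Real.sqrt_pos.mpr hu
  have hs2 : s ^ 2 = 4*t-1 := Real.sq_sqrt hu.le
  have haff : HasDerivAt (fun t : ℝ => 4*t-1) 4 t := by
    simpa using ((hasDerivAt_id t).const_mul (4:ℝ)).sub_const 1
  have hsqrt : HasDerivAt (fun t : ℝ => Real.sqrt (4*t-1)) (4/(2*s)) t :=
    haff.sqrt (by positivity)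
  have harct : HasDerivAt (fun t : ℝ => Real.arctan (Real.sqrt (4*t-1)))
      (1 / (1 + s^2) * (4/(2*s))) t := hsqrt.arctan
  have hden : HasDerivAt (fun t : ℝ => 2*t) 2 t := by
    simpa using (hasDerivAt_id t).const_mul (2:ℝ)
  have hdiv : HasDerivAt (fun t : ℝ => Real.sqrt (4*t-1)/(2*t))
      ((4/(2*s) * (2*t) - s * 2)/(2*t)^2) t := hsqrt.div hden (by positivity)
  have key := ((hsqrt.div_const 2).sub (harct.const_mul 3)).add hdiv
  convert key using 1
  · rfl
  · rfl
  · rfl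
  have h4t : (1:ℝ) + s^2 = 4*t := by rw [hs2]; ring
  rw [h4t]
  field_simp
  linear_combination 2 * hs2

lemma sqrtint : IntervalIntegrable (fun t : ℝ => 1 / Real.sqrt (4*t-1))
    MeasureTheory.volume (1/4) 1 := by
  have heq : (fun t : ℝ => 1 / Real.sqrt (4*t-1)) = fun t : ℝ => (4*t-1) ^ (-(1/2) : ℝ) := by
    funext x
    rcases le_or_gt 0 (4*x-1) with h | h
    · rw [one_div, Real.sqrt_eq_rpow, ← Real.rpow_neg h]
    · rw [Real.sqrt_eq_zero_of_nonpos h.le, Real.rpow_def_of_neg h]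
      norm_num
      rw [show ((1:ℝ)/2 * π) = π/2 by ring, Real.cos_pi_div_two]
  rw [heq]
  have h1 : IntervalIntegrable (fun x : ℝ => x ^ (-(1/2) : ℝ)) MeasureTheory.volume 0 3 :=
    intervalIntegrable_rpow' (by norm_num)
  have h3 := (h1.comp_sub_right 1).comp_mul_left (c := 4)
  norm_num at h3
  exact h3

lemma bracket_cont : ContinuousOn (fun t : ℝ =>
    (t ^ 0 * ∑ j ∈ Finset.Icc 1 2, ((Nat.choose 2 j : ℝ)) * (1 - t) ^ (j - 1) * ((uu t) ^ j).re
        - ∑ l ∈ Finset.range 0, t ^ l)) (Set.uIcc (1/4 : ℝ) 1) := by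
  have huu : ContinuousOn uu (Set.uIcc (1/4 : ℝ) 1) := by
    apply ContinuousOn.div
    · fun_prop
    · fun_prop
    · intro x hx
      rw [Set.uIcc_of_le (by norm_num)] at hx
      simp only [ne_eq, mul_eq_zero]
      push_neg
      refine ⟨by norm_num, ?_⟩
      exact_mod_cast (by intro h; exact absurd (h ▸ hx.1) (by norm_num) : x ≠ 0)
  apply ContinuousOn.sub
  · apply ContinuousOn.mul (by fun_prop)
    apply continuousOn_finset_sum
    intro j _
    apply ContinuousOn.mul (by fun_prop)
    exact Complex.continuous_re.comp_continuousOn (huu.pow j)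
  · fun_prop

lemma FF_cont : ContinuousOn FF (Set.Icc (1/4 : ℝ) 1) := by
  unfold FF
  apply ContinuousOn.add
  · apply ContinuousOn.sub
    · fun_prop
    · have : Continuous fun x : ℝ => 3 * Real.arctan (Real.sqrt (4*x-1)) :=
        continuous_const.mul (Real.continuous_arctan.comp (Real.continuous_sqrt.comp
          ((continuous_const.mul continuous_id).sub continuous_const)))
      exact this.continuousOn
  · apply ContinuousOn.div
    · fun_prop
    · fun_prop
    · intro x hx
      have : (1:ℝ)/4 ≤ x := hx.1
      intro h
      have : x = 0 := by linarith [mul_eq_zero.mp h]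
      linarith
  
/-- `𝒢(2,0) = (3√3)/π − 3`. -/
theorem calG_two_zero : calG 2 0 = 3 * Real.sqrt 3 / Real.pi - 3 := by
  have hint : IntervalIntegrable (fun t : ℝ => (1 / Real.sqrt (4*t-1)) *
      (t ^ 0 * ∑ j ∈ Finset.Icc 1 2, ((Nat.choose 2 j : ℝ)) * (1 - t) ^ (j - 1) * ((uu t) ^ j).re
        - ∑ l ∈ Finset.range 0, t ^ l)) MeasureTheory.volume (1/4) 1 :=
    sqrtint.mul_continuousOn bracket_cont
  have hderiv : ∀ t ∈ Set.Ioo (1/4 : ℝ) 1, HasDerivWithinAt FF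
      ((1 / Real.sqrt (4*t-1)) *
      (t ^ 0 * ∑ j ∈ Finset.Icc 1 2, ((Nat.choose 2 j : ℝ)) * (1 - t) ^ (j - 1) * ((uu t) ^ j).re
        - ∑ l ∈ Finset.range 0, t ^ l)) (Set.Ioi t) t := by
    intro t ht
    rw [bracket_eq t (by linarith [ht.1]) ht.1.le]
    exact (FF_hasDerivAt t ht).hasDerivWithinAt
  have hftc := intervalIntegral.integral_eq_sub_of_hasDeriv_right_of_le (by norm_num)
      FF_cont hderiv hint
  have harc : Real.arctan (Real.sqrt 3) = π/3 := by
    rw [← Real.tan_pi_div_three]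
    exact Real.arctan_tan (by linarith [Real.pi_pos]) (by linarith [Real.pi_pos])
  have hF1 : FF 1 = Real.sqrt 3 - π := by
    unfold FF
    norm_num [harc]
    ring
  have hF4 : FF (1/4 : ℝ) = 0 := by
    unfold FF
    norm_num
  rw [calG, hftc, hF1, hF4]
  have hπ : Real.pi ≠ 0 := Real.pi_ne_zero
  field_simp
  ring
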